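/- arXiv:1306.0219 — 4 statements merged into one kernel-verified Lean document; each statement's English description precedes it below -/
import Mathlib

section
/- Let H, κ ∈ ℝ with K := 4H² + κ < 0, and let v : ℝ → ℝ be differentiable on the interval (0, π/2). Define u on the open first quadrant Q := {(x,y) ∈ ℝ² : x > 0 ∧ y > 0} by u(x,y) := v(arctan(y/x)). Then for every (x,y) ∈ Q, writing s := arctan(y/x) and λ := 1/(√(−K)·y), one has 1 + (∂ₓu(x,y)/λ + 2H·λ·y)² + (∂ᵧu(x,y)/λ)² = 1 − 4H²/K − 4H·sin²(s)·v′(s) − K·sin²(s)·v′(s)². -/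
open Real Set

/-- Evaluation of the gradient quantity `w = 1 + (u_x/λ + 2Hλy)² + (u_y/λ)²` on a
rotation-invariant graph `u(x,y) = v(arctan(y/x))` over the open first quadrant,
in the model of `E(κ+4H², H)` with `K := 4H² + κ < 0` and `λ = 1/(√(−K)·y)`. -/
theorem gradient_quantity_rotation_invariant
    (H κ : ℝ) (hK : 4 * H ^ 2 + κ < 0)
    (v : ℝ → ℝ) (hv : DifferentiableOn ℝ v (Ioo 0 (π / 2)))
    (x y : ℝ) (hx : 0 < x) (hy : 0 < y) :
    let K : ℝ := 4 * H ^ 2 + κ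
    let u : ℝ × ℝ → ℝ := fun p => v (Real.arctan (p.2 / p.1))
    let s : ℝ := Real.arctan (y / x)
    let lam : ℝ := 1 / (Real.sqrt (-K) * y)
    let ux : ℝ := fderiv ℝ u (x, y) (1, 0)
    let uy : ℝ := fderiv ℝ u (x, y) (0, 1)
    1 + (ux / lam + 2 * H * lam * y) ^ 2 + (uy / lam) ^ 2
      = 1 - 4 * H ^ 2 / K - 4 * H * (Real.sin s) ^ 2 * deriv v s
        - K * (Real.sin s) ^ 2 * (deriv v s) ^ 2 := by
  intro K u s lam ux uy
  have hx0 : x ≠ 0 := hx.ne'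
  have hy0 : y ≠ 0 := hy.ne'
  have hs : s ∈ Ioo 0 (π / 2) := by
    constructor
    · have : Real.arctan 0 < Real.arctan (y / x) :=
        Real.arctan_strictMono (div_pos hy hx)
      rw [Real.arctan_zero] at this; exact this
    · exact Real.arctan_lt_pi_div_two _
  have hvd : HasDerivAt v (deriv v s) s :=
    ((hv.differentiableAt (isOpen_Ioo.mem_nhds hs))).hasDerivAt
  set d := deriv v s with hd
  have h1 : HasFDerivAt (fun p : ℝ × ℝ => (p.1)⁻¹)
      ((-(x ^ 2)⁻¹ : ℝ) • ContinuousLinearMap.fst ℝ ℝ ℝ) (x, y) :=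
    (hasDerivAt_inv hx0).comp_hasFDerivAt (x, y) hasFDerivAt_fst
  have h2 : HasFDerivAt (fun p : ℝ × ℝ => p.2 * (p.1)⁻¹)
      (y • ((-(x ^ 2)⁻¹ : ℝ) • ContinuousLinearMap.fst ℝ ℝ ℝ)
        + x⁻¹ • ContinuousLinearMap.snd ℝ ℝ ℝ) (x, y) :=
    (hasFDerivAt_snd.mul h1 : _)
  have h3 : HasFDerivAt (fun p : ℝ × ℝ => Real.arctan (p.2 * (p.1)⁻¹))
      ((1 / (1 + (y / x) ^ 2)) •
        (y • ((-(x ^ 2)⁻¹ : ℝ) • ContinuousLinearMap.fst ℝ ℝ ℝ)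
          + x⁻¹ • ContinuousLinearMap.snd ℝ ℝ ℝ)) (x, y) := by
    have := (Real.hasDerivAt_arctan (y * x⁻¹)).comp_hasFDerivAt (x, y) h2
    simpa [div_eq_mul_inv, Function.comp_def] using this
  have h4 : HasFDerivAt u
      (d • ((1 / (1 + (y / x) ^ 2)) •
        (y • ((-(x ^ 2)⁻¹ : ℝ) • ContinuousLinearMap.fst ℝ ℝ ℝ)
          + x⁻¹ • ContinuousLinearMap.snd ℝ ℝ ℝ))) (x, y) := by
    have hvd' : HasDerivAt v d (Real.arctan (y * x⁻¹)) := by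
      rwa [show y * x⁻¹ = y / x from (div_eq_mul_inv y x).symm]
    have h := hvd'.comp_hasFDerivAt (x, y) h3
    simpa [u, Function.comp, div_eq_mul_inv, Function.comp_def] using h
  have hf : fderiv ℝ u (x, y) = _ := h4.fderiv
  have hux : ux = d * ((1 / (1 + (y / x) ^ 2)) * (y * (-(x ^ 2)⁻¹))) := by
    simp [ux, hf]
  have huy : uy = d * ((1 / (1 + (y / x) ^ 2)) * x⁻¹) := by
    simp [uy, hf]
  have hKneg : K < 0 := hK
  have hK0 : K ≠ 0 := ne_of_lt hKneg
  set c := Real.sqrt (-K) with hc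
  have hc0 : 0 < c := Real.sqrt_pos.2 (by linarith)
  have hc2 : c ^ 2 = -K := Real.sq_sqrt (by linarith)
  have hKc : K = -c ^ 2 := by linarith
  have hR : (0:ℝ) < x ^ 2 + y ^ 2 := by positivity
  have hlam : lam = 1 / (c * y) := rfl
  have hsin : (Real.sin s) ^ 2 = y ^ 2 / (x ^ 2 + y ^ 2) := by
    rw [show s = Real.arctan (y / x) from rfl, Real.sin_arctan]
    rw [div_pow, Real.sq_sqrt (by positivity)]
    field_simp
  have e1 : ux / lam = -(c * d * y ^ 2 / (x ^ 2 + y ^ 2)) := by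
    rw [hux, hlam]
    field_simp
  have e2 : 2 * H * lam * y = 2 * H / c := by
    rw [hlam]; field_simp
  have e3 : uy / lam = c * d * x * y / (x ^ 2 + y ^ 2) := by
    rw [huy, hlam]
    field_simp
  rw [e1, e2, e3, hsin, hKc]
  field_simp
  ring
end

section
/- Let H, κ ∈ ℝ with K := 4H² + κ < 0, and let v : ℝ → ℝ be twice continuously differentiable on (0, π/2). Define u on the open first quadrant Q := {(x,y) ∈ ℝ² : x > 0 ∧ y > 0} by u(x,y) := v(arctan(y/x)), and define w : Q → ℝ by w := 1 + (∂ₓu/λ + 2Hλy)² + (∂ᵧu/λ)², where λ := 1/(√(−K)·y). Then for each (x,y) ∈ Q, the minimal surface equation 2w·(∂ₓₓu + ∂ᵧᵧu) − ((2H/(−K·y) + ∂ₓu)·∂ₓw + ∂ᵧu·∂ᵧw) = 0 holds at (x,y) if and only if 2·W(s)·K·v″(s) − W′(s)·(2H + K·v′(s)) = 0 at s := arctan(y/x), where W(s) := 1 − 4H²/K − 4H·sin²(s)·v′(s) − K·sin²(s)·v′(s)². -/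
open Real Set

private noncomputable def Dg (a b : ℝ) : ℝ × ℝ →L[ℝ] ℝ :=
  (1 / (1 + (b / a) ^ 2)) • ((b : ℝ) • ((-(a ^ 2)⁻¹) • ContinuousLinearMap.fst ℝ ℝ ℝ)
    + (a : ℝ)⁻¹ • ContinuousLinearMap.snd ℝ ℝ ℝ)

private lemma hasFDerivAt_arctanQ (a b : ℝ) (ha : a ≠ 0) :
    HasFDerivAt (fun p : ℝ × ℝ => Real.arctan (p.2 / p.1)) (Dg a b) (a, b) := by
  have hinv : HasFDerivAt (fun p : ℝ × ℝ => (p.1)⁻¹)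
      ((-(a ^ 2)⁻¹) • ContinuousLinearMap.fst ℝ ℝ ℝ) (a, b) :=
    (hasDerivAt_inv ha).comp_hasFDerivAt (a, b) hasFDerivAt_fst
  have hdiv : HasFDerivAt (fun p : ℝ × ℝ => p.2 / p.1)
      ((b : ℝ) • ((-(a ^ 2)⁻¹) • ContinuousLinearMap.fst ℝ ℝ ℝ)
        + (a : ℝ)⁻¹ • ContinuousLinearMap.snd ℝ ℝ ℝ) (a, b) := by
    simp only [div_eq_mul_inv]
    exact (hasFDerivAt_snd (𝕜 := ℝ) (E := ℝ) (F := ℝ)).mul hinv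
  exact (Real.hasDerivAt_arctan (b / a)).comp_hasFDerivAt (a, b) hdiv

private lemma Dg_apply (a b c d : ℝ) (ha : 0 < a) :
    Dg a b (c, d) = (a * d - b * c) / (a ^ 2 + b ^ 2) := by
  have h1 : a ^ 2 + b ^ 2 ≠ 0 := by positivity
  simp only [Dg, ContinuousLinearMap.smul_apply, ContinuousLinearMap.add_apply,
    ContinuousLinearMap.coe_fst', ContinuousLinearMap.coe_snd', smul_eq_mul]
  field_simp
  ring

set_option maxHeartbeats 1000000 in
/-- For a rotation-invariant graph `u(x,y) = v(arctan(y/x))` over the open first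
quadrant, the minimal surface equation
`2w(u_xx + u_yy) − ((2H/(−K·y) + u_x)w_x + u_y w_y) = 0`
in the model of `E(κ+4H², H)` (with `K := 4H² + κ < 0`, `λ = 1/(√(−K)·y)` and
`w = 1 + (u_x/λ + 2Hλy)² + (u_y/λ)²`) holds at `(x,y)` iff the ODE
`2·W(s)·K·v″(s) − W′(s)·(2H + K·v′(s)) = 0` holds at `s = arctan(y/x)`, where
`W(s) = 1 − 4H²/K − 4H·sin²(s)·v′(s) − K·sin²(s)·v′(s)²`. -/
theorem minimal_surface_equation_reduces_to_ODE
    (H κ : ℝ) (hK : 4 * H ^ 2 + κ < 0)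
    (v : ℝ → ℝ) (hv : ContDiffOn ℝ 2 v (Ioo 0 (π / 2)))
    (x y : ℝ) (hx : 0 < x) (hy : 0 < y) :
    let K : ℝ := 4 * H ^ 2 + κ
    let u : ℝ × ℝ → ℝ := fun p => v (Real.arctan (p.2 / p.1))
    let lam : ℝ × ℝ → ℝ := fun p => 1 / (Real.sqrt (-K) * p.2)
    let ux : ℝ × ℝ → ℝ := fun p => fderiv ℝ u p (1, 0)
    let uy : ℝ × ℝ → ℝ := fun p => fderiv ℝ u p (0, 1)
    let w : ℝ × ℝ → ℝ := fun p =>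
      1 + (ux p / lam p + 2 * H * lam p * p.2) ^ 2 + (uy p / lam p) ^ 2
    let uxx : ℝ := fderiv ℝ ux (x, y) (1, 0)
    let uyy : ℝ := fderiv ℝ uy (x, y) (0, 1)
    let wx : ℝ := fderiv ℝ w (x, y) (1, 0)
    let wy : ℝ := fderiv ℝ w (x, y) (0, 1)
    let s : ℝ := Real.arctan (y / x)
    let W : ℝ → ℝ := fun t =>
      1 - 4 * H ^ 2 / K - 4 * H * (Real.sin t) ^ 2 * deriv v t
        - K * (Real.sin t) ^ 2 * (deriv v t) ^ 2
    (2 * w (x, y) * (uxx + uyy)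
        - ((2 * H / (-K * y) + ux (x, y)) * wx + uy (x, y) * wy) = 0)
      ↔ 2 * W s * K * deriv (deriv v) s - deriv W s * (2 * H + K * deriv v s) = 0 := by
  intro K u lam ux uy w uxx uyy wx wy s W
  have hK' : K < 0 := hK
  have hKne : K ≠ 0 := ne_of_lt hK'
  set r2 : ℝ := x ^ 2 + y ^ 2 with hr2def
  have hr2 : 0 < r2 := by positivity
  -- the open quadrant
  have hQ : IsOpen {p : ℝ × ℝ | 0 < p.1 ∧ 0 < p.2} :=
    (isOpen_lt continuous_const continuous_fst).inter
      (isOpen_lt continuous_const continuous_snd)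
  have hQmem : {p : ℝ × ℝ | 0 < p.1 ∧ 0 < p.2} ∈ nhds (x, y) := hQ.mem_nhds ⟨hx, hy⟩
  have hsI : ∀ p : ℝ × ℝ, 0 < p.1 → 0 < p.2 → Real.arctan (p.2 / p.1) ∈ Ioo 0 (π / 2) :=
    fun p h1 h2 => ⟨by rw [← Real.arctan_zero]; exact Real.arctan_strictMono (div_pos h2 h1),
      Real.arctan_lt_pi_div_two _⟩
  have hsmem : s ∈ Ioo 0 (π / 2) := hsI (x, y) hx hy
  -- differentiability of v and deriv v
  have hvd : ∀ t ∈ Ioo 0 (π / 2), HasDerivAt v (deriv v t) t := fun t ht =>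
    ((hv.differentiableOn (by norm_num)).differentiableAt
      (isOpen_Ioo.mem_nhds ht)).hasDerivAt
  have hdv : ContDiffOn ℝ 1 (deriv v) (Ioo 0 (π / 2)) :=
    hv.deriv_of_isOpen isOpen_Ioo (by norm_num)
  have hdvd : ∀ t ∈ Ioo 0 (π / 2), HasDerivAt (deriv v) (deriv (deriv v) t) t := fun t ht =>
    ((hdv.differentiableOn (by norm_num)).differentiableAt
      (isOpen_Ioo.mem_nhds ht)).hasDerivAt
  -- first derivatives of u on the quadrant
  have hu : ∀ p : ℝ × ℝ, 0 < p.1 → 0 < p.2 →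
      HasFDerivAt u ((deriv v (Real.arctan (p.2 / p.1))) • Dg p.1 p.2) p := fun p h1 h2 =>
    (hvd _ (hsI p h1 h2)).comp_hasFDerivAt p (hasFDerivAt_arctanQ p.1 p.2 h1.ne')
  have hux : ∀ p : ℝ × ℝ, 0 < p.1 → 0 < p.2 →
      ux p = deriv v (Real.arctan (p.2 / p.1)) * (-p.2 / (p.1 ^ 2 + p.2 ^ 2)) := by
    intro p h1 h2
    unfold ux
    beta_reduce
    rw [(hu p h1 h2).fderiv]
    have := Dg_apply p.1 p.2 1 0 h1
    simp only [ContinuousLinearMap.smul_apply, smul_eq_mul]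
    rw [this]
    ring
  have huy : ∀ p : ℝ × ℝ, 0 < p.1 → 0 < p.2 →
      uy p = deriv v (Real.arctan (p.2 / p.1)) * (p.1 / (p.1 ^ 2 + p.2 ^ 2)) := by
    intro p h1 h2
    unfold uy
    beta_reduce
    rw [(hu p h1 h2).fderiv]
    have := Dg_apply p.1 p.2 0 1 h1
    simp only [ContinuousLinearMap.smul_apply, smul_eq_mul]
    rw [this]
    ring
  -- building blocks at (x, y)
  have hr2f : HasFDerivAt (fun p : ℝ × ℝ => p.1 ^ 2 + p.2 ^ 2)
      ((((2 : ℕ) : ℝ) * x ^ 1) • ContinuousLinearMap.fst ℝ ℝ ℝ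
        + (((2 : ℕ) : ℝ) * y ^ 1) • ContinuousLinearMap.snd ℝ ℝ ℝ) (x, y) := by
    exact ((hasDerivAt_pow 2 x).comp_hasFDerivAt (f := Prod.fst) (x, y) hasFDerivAt_fst).add
      ((hasDerivAt_pow 2 y).comp_hasFDerivAt (f := Prod.snd) (x, y) hasFDerivAt_snd)
  have hinvr2 : HasFDerivAt (fun p : ℝ × ℝ => (p.1 ^ 2 + p.2 ^ 2)⁻¹)
      ((-(r2 ^ 2)⁻¹) • ((((2 : ℕ) : ℝ) * x ^ 1) • ContinuousLinearMap.fst ℝ ℝ ℝ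
        + (((2 : ℕ) : ℝ) * y ^ 1) • ContinuousLinearMap.snd ℝ ℝ ℝ)) (x, y) :=
    (hasDerivAt_inv hr2.ne').comp_hasFDerivAt (x, y) hr2f
  have hA : HasFDerivAt (fun p : ℝ × ℝ => deriv v (Real.arctan (p.2 / p.1)))
      ((deriv (deriv v) s) • Dg x y) (x, y) :=
    (hdvd s hsmem).comp_hasFDerivAt (f := fun p : ℝ × ℝ => Real.arctan (p.2 / p.1)) (x, y) (hasFDerivAt_arctanQ x y hx.ne')
  -- second derivative uxx
  have hUxev : ux =ᶠ[nhds (x, y)]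
      (fun p : ℝ × ℝ => deriv v (Real.arctan (p.2 / p.1)) * (-p.2 / (p.1 ^ 2 + p.2 ^ 2))) :=
    Filter.eventually_of_mem hQmem (fun p hp => hux p hp.1 hp.2)
  have hB : HasFDerivAt (fun p : ℝ × ℝ => -p.2 / (p.1 ^ 2 + p.2 ^ 2))
      ((-y) • ((-(r2 ^ 2)⁻¹) • ((((2 : ℕ) : ℝ) * x ^ 1) • ContinuousLinearMap.fst ℝ ℝ ℝ
          + (((2 : ℕ) : ℝ) * y ^ 1) • ContinuousLinearMap.snd ℝ ℝ ℝ))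
        + (r2⁻¹) • (-(ContinuousLinearMap.snd ℝ ℝ ℝ))) (x, y) := by
    simp only [div_eq_mul_inv]
    exact ((hasFDerivAt_snd (𝕜 := ℝ) (E := ℝ) (F := ℝ)).neg).mul hinvr2
  have huxx : uxx = (deriv v s * (2 * x * y) + deriv (deriv v) s * y ^ 2) / r2 ^ 2 := by
    unfold uxx
    rw [hUxev.fderiv_eq, (show HasFDerivAt (fun p : ℝ × ℝ => deriv v (Real.arctan (p.2 / p.1)) * (-p.2 / (p.1 ^ 2 + p.2 ^ 2))) _ (x, y) from hA.mul hB).fderiv]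
    simp only [ContinuousLinearMap.add_apply, ContinuousLinearMap.smul_apply,
      ContinuousLinearMap.coe_fst', ContinuousLinearMap.coe_snd',
      ContinuousLinearMap.neg_apply, smul_eq_mul, Dg_apply x y 1 0 hx]
    field_simp
    ring
  -- second derivative uyy
  have hUyev : uy =ᶠ[nhds (x, y)]
      (fun p : ℝ × ℝ => deriv v (Real.arctan (p.2 / p.1)) * (p.1 / (p.1 ^ 2 + p.2 ^ 2))) :=
    Filter.eventually_of_mem hQmem (fun p hp => huy p hp.1 hp.2)
  have hC : HasFDerivAt (fun p : ℝ × ℝ => p.1 / (p.1 ^ 2 + p.2 ^ 2))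
      (x • ((-(r2 ^ 2)⁻¹) • ((((2 : ℕ) : ℝ) * x ^ 1) • ContinuousLinearMap.fst ℝ ℝ ℝ
          + (((2 : ℕ) : ℝ) * y ^ 1) • ContinuousLinearMap.snd ℝ ℝ ℝ))
        + (r2⁻¹) • (ContinuousLinearMap.fst ℝ ℝ ℝ)) (x, y) := by
    simp only [div_eq_mul_inv]
    exact (hasFDerivAt_fst (𝕜 := ℝ) (E := ℝ) (F := ℝ)).mul hinvr2
  have huyy : uyy = (deriv v s * (-(2 * x * y)) + deriv (deriv v) s * x ^ 2) / r2 ^ 2 := by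
    unfold uyy
    rw [hUyev.fderiv_eq, (show HasFDerivAt (fun p : ℝ × ℝ => deriv v (Real.arctan (p.2 / p.1)) * (p.1 / (p.1 ^ 2 + p.2 ^ 2))) _ (x, y) from hA.mul hC).fderiv]
    simp only [ContinuousLinearMap.add_apply, ContinuousLinearMap.smul_apply,
      ContinuousLinearMap.coe_fst', ContinuousLinearMap.coe_snd',
      ContinuousLinearMap.neg_apply, smul_eq_mul, Dg_apply x y 0 1 hx]
    field_simp
    ring
  -- w agrees with W ∘ arctan on the quadrant
  have hnegK : (0 : ℝ) < -K := by linarith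
  obtain ⟨S, hSdef⟩ : ∃ S : ℝ, S = Real.sqrt (-K) := ⟨_, rfl⟩
  have hS : (0 : ℝ) < S := hSdef ▸ Real.sqrt_pos.2 hnegK
  have hS2 : S ^ 2 = -K := hSdef ▸ Real.sq_sqrt hnegK.le
  have hKS : K = -S ^ 2 := by linarith
  have hwW : ∀ p : ℝ × ℝ, 0 < p.1 → 0 < p.2 → w p = W (Real.arctan (p.2 / p.1)) := by
    intro p h1 h2
    have hr : (0 : ℝ) < p.1 ^ 2 + p.2 ^ 2 := by positivity
    have hsin : Real.sin (Real.arctan (p.2 / p.1)) ^ 2 = p.2 ^ 2 / (p.1 ^ 2 + p.2 ^ 2) := by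
      rw [Real.sin_arctan, div_pow, Real.sq_sqrt (by positivity), div_pow]
      have h1' := h1.ne'
      have hr' := hr.ne'
      field_simp
    unfold w W lam
    beta_reduce
    rw [hux p h1 h2, huy p h1 h2, hsin, ← hSdef, hKS]
    have h1' := h1.ne'
    have h2' := h2.ne'
    have hr' := hr.ne'
    have hS' := hS.ne'
    field_simp
    ring
  have hwev : w =ᶠ[nhds (x, y)]
      (fun p : ℝ × ℝ => W (Real.arctan (p.2 / p.1))) :=
    Filter.eventually_of_mem hQmem (fun p hp => hwW p hp.1 hp.2)
  -- derivative of W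
  have hdvs : DifferentiableAt ℝ (deriv v) s :=
    (hdv.differentiableOn one_ne_zero).differentiableAt (isOpen_Ioo.mem_nhds hsmem)
  have hWdiff : DifferentiableAt ℝ W s := by
    have h1 : DifferentiableAt ℝ (fun t : ℝ => Real.sin t ^ 2) s :=
      (Real.differentiable_sin s).pow 2
    exact (((differentiableAt_const _).sub
      (((differentiableAt_const _).mul h1).mul hdvs))).sub
      (((differentiableAt_const _).mul h1).mul (hdvs.pow 2))
  have hWg : HasFDerivAt (fun p : ℝ × ℝ => W (Real.arctan (p.2 / p.1)))
      ((deriv W s) • Dg x y) (x, y) :=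
    (hWdiff.hasDerivAt).comp_hasFDerivAt (f := fun p : ℝ × ℝ => Real.arctan (p.2 / p.1)) (x, y) (hasFDerivAt_arctanQ x y hx.ne')
  have hwx : wx = deriv W s * (-y / r2) := by
    unfold wx
    rw [hwev.fderiv_eq, hWg.fderiv]
    simp only [ContinuousLinearMap.smul_apply, smul_eq_mul, Dg_apply x y 1 0 hx]
    ring
  have hwy : wy = deriv W s * (x / r2) := by
    unfold wy
    rw [hwev.fderiv_eq, hWg.fderiv]
    simp only [ContinuousLinearMap.smul_apply, smul_eq_mul, Dg_apply x y 0 1 hx]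
    ring
  -- values at the point
  have e1 : w (x, y) = W s := hwW (x, y) hx hy
  have e5 : ux (x, y) = deriv v s * (-y / r2) := hux (x, y) hx hy
  have e6 : uy (x, y) = deriv v s * (x / r2) := huy (x, y) hx hy
  rw [e1, e5, e6, huxx, huyy, hwx, hwy]
  have hKr : K * r2 ≠ 0 := mul_ne_zero hKne hr2.ne'
  have main : 2 * W s * ((deriv v s * (2 * x * y) + deriv (deriv v) s * y ^ 2) / r2 ^ 2
        + (deriv v s * (-(2 * x * y)) + deriv (deriv v) s * x ^ 2) / r2 ^ 2)
      - ((2 * H / (-K * y) + deriv v s * (-y / r2)) * (deriv W s * (-y / r2))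
        + deriv v s * (x / r2) * (deriv W s * (x / r2)))
      = (2 * W s * K * deriv (deriv v) s - deriv W s * (2 * H + K * deriv v s)) / (K * r2) := by
    rw [hr2def]
    have hxy : x ^ 2 + y ^ 2 ≠ 0 := by positivity
    field_simp
    ring
  rw [main, div_eq_zero_iff, or_iff_left hKr]
end

section
/- Let H, κ ∈ ℝ with K := 4H² + κ < 0. Define u₀ : [0, π/2) → ℝ by u₀(s) := (1/K)·(−2H·s + ∫₀ˢ √(4H²·cos²(t) − K)/cos(t) dt). Then u₀ is differentiable on (0, π/2), with u₀′(s) = (1/K)·(−2H + √(4H²·cos²(s) − K)/cos(s)), and for every s ∈ (0, π/2) the first-integral identity (2H + K·u₀′(s))² = −K·W(s) holds, where W(s) := 1 − 4H²/K − 4H·sin²(s)·u₀′(s) − K·sin²(s)·u₀′(s)²; moreover W(s) > 0 for all s ∈ (0, π/2). -/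
open Real Set MeasureTheory intervalIntegral

lemma scherk_aux (K H c sn d q : ℝ) (hKne : K ≠ 0) (hcne : c ≠ 0)
    (hq : q ^ 2 = 4 * H ^ 2 * c ^ 2 - K) (hsin : sn ^ 2 = 1 - c ^ 2)
    (hKu : 2 * H + K * d = q / c) :
    (2 * H + K * d) ^ 2 = -K * (1 - 4 * H ^ 2 / K - 4 * H * sn ^ 2 * d - K * sn ^ 2 * d ^ 2) := by
  have hd : d = (q / c - 2 * H) / K := by
    field_simp at hKu ⊢
    linarith
  rw [hKu, hd, hsin]
  field_simp
  ring_nf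
  linear_combination c^2 * hq

/-- The Scherk-type profile
`u₀(s) = (1/K)·(−2H·s + ∫₀ˢ √(4H²·cos²(t) − K)/cos(t) dt)` (with `K := 4H² + κ < 0`)
is differentiable on `(0, π/2)` with the stated derivative, satisfies the
first-integral identity `(2H + K·u₀′)² = −K·W` where
`W(s) = 1 − 4H²/K − 4H·sin²(s)·u₀′(s) − K·sin²(s)·u₀′(s)²`, and `W > 0`. -/
theorem scherk_profile_first_integral
    (H κ : ℝ) (hK : 4 * H ^ 2 + κ < 0) :
    let K : ℝ := 4 * H ^ 2 + κ
    let u₀ : ℝ → ℝ := fun s => (1 / K) *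
      (-2 * H * s + ∫ t in (0:ℝ)..s, Real.sqrt (4 * H ^ 2 * (Real.cos t) ^ 2 - K) / Real.cos t)
    let W : ℝ → ℝ := fun s =>
      1 - 4 * H ^ 2 / K - 4 * H * (Real.sin s) ^ 2 * deriv u₀ s
        - K * (Real.sin s) ^ 2 * (deriv u₀ s) ^ 2
    ∀ s ∈ Ioo 0 (π / 2),
      HasDerivAt u₀ ((1 / K) *
        (-2 * H + Real.sqrt (4 * H ^ 2 * (Real.cos s) ^ 2 - K) / Real.cos s)) s
      ∧ (2 * H + K * deriv u₀ s) ^ 2 = -K * W s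
      ∧ 0 < W s := by
  intro K u₀ W s hs
  have hK0 : K < 0 := hK
  have hKne : K ≠ 0 := ne_of_lt hK0
  set f : ℝ → ℝ := fun t => Real.sqrt (4 * H ^ 2 * (Real.cos t) ^ 2 - K) / Real.cos t with hf
  have hcont : ContinuousOn f (Ioo (-(π/2)) (π/2)) := by
    apply ContinuousOn.div
    · exact (Real.continuous_sqrt.comp
        ((continuous_const.mul (Real.continuous_cos.pow 2)).sub continuous_const)).continuousOn
    · exact Real.continuous_cos.continuousOn
    · intro t ht
      exact ne_of_gt (Real.cos_pos_of_mem_Ioo ht)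
  have hsmem : s ∈ Ioo (-(π/2)) (π/2) := by
    constructor
    · linarith [hs.1, pi_pos]
    · exact hs.2
  have hcos : 0 < Real.cos s := Real.cos_pos_of_mem_Ioo hsmem
  have hsub : Icc (0:ℝ) s ⊆ Ioo (-(π/2)) (π/2) := by
    intro t ht
    constructor
    · linarith [ht.1, pi_pos]
    · linarith [ht.2, hs.2]
  have hint : IntervalIntegrable f volume 0 s := by
    apply ContinuousOn.intervalIntegrable
    rw [uIcc_of_le (le_of_lt hs.1)]
    exact hcont.mono hsub
  have hmeas : StronglyMeasurableAtFilter f (nhds s) volume :=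
    hcont.stronglyMeasurableAtFilter isOpen_Ioo s hsmem
  have hcontAt : ContinuousAt f s :=
    hcont.continuousAt (isOpen_Ioo.mem_nhds hsmem)
  have hF : HasDerivAt (fun u => ∫ t in (0:ℝ)..u, f t) (f s) s :=
    intervalIntegral.integral_hasDerivAt_right hint hmeas hcontAt
  have hlin : HasDerivAt (fun u : ℝ => -2 * H * u) (-2 * H) s := by
    simpa using (hasDerivAt_id s).const_mul (-2 * H)
  have hD : HasDerivAt u₀ ((1 / K) * (-2 * H + f s)) s := ((hlin.add hF).const_mul (1 / K))
  refine ⟨hD, ?_⟩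
  have hargpos : 0 < 4 * H ^ 2 * (Real.cos s) ^ 2 - K := by
    nlinarith [sq_nonneg (H * Real.cos s)]
  have hq : (Real.sqrt (4 * H ^ 2 * (Real.cos s) ^ 2 - K)) ^ 2
      = 4 * H ^ 2 * (Real.cos s) ^ 2 - K := Real.sq_sqrt (le_of_lt hargpos)
  have hqpos : 0 < Real.sqrt (4 * H ^ 2 * (Real.cos s) ^ 2 - K) := Real.sqrt_pos.2 hargpos
  have hcne : Real.cos s ≠ 0 := ne_of_gt hcos
  have hsin : (Real.sin s) ^ 2 = 1 - (Real.cos s) ^ 2 := by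
    have := Real.sin_sq_add_cos_sq s; linarith
  have hKu : 2 * H + K * deriv u₀ s
      = Real.sqrt (4 * H ^ 2 * (Real.cos s) ^ 2 - K) / Real.cos s := by
    rw [hD.deriv]
    simp only [hf]
    field_simp [hf]
    ring
  have hid : (2 * H + K * deriv u₀ s) ^ 2 = -K * W s :=
    scherk_aux K H (Real.cos s) (Real.sin s) (deriv u₀ s) _ hKne hcne hq hsin hKu
  refine ⟨hid, ?_⟩
  have h1 : 0 < -K * W s := by
    rw [← hid, hKu]
    positivity
  nlinarith [h1]
end

section
/- Let H, κ ∈ ℝ with K := 4H² + κ < 0. Define u₀ : [0, π/2) → ℝ by u₀(s) := (1/K)·(−2H·s + ∫₀ˢ √(4H²·cos²(t) − K)/cos(t) dt), and W(s) := 1 − 4H²/K − 4H·sin²(s)·u₀′(s) − K·sin²(s)·u₀′(s)². Then u₀ is twice differentiable on (0, π/2), W is differentiable on (0, π/2), and 2·W(s)·K·u₀″(s) − W′(s)·(2H + K·u₀′(s)) = 0 for all s ∈ (0, π/2). -/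
open Real Set MeasureTheory intervalIntegral

private lemma scherk_key (H K c σ a p : ℝ) (hK : K ≠ 0) (hc : c ≠ 0) (ha : a ≠ 0)
    (hp : K * p = a / c - 2 * H)
    (ha2 : a ^ 2 = 4 * H ^ 2 * c ^ 2 - K)
    (hs2 : σ ^ 2 = 1 - c ^ 2) :
    2 * (1 - 4*H^2/K - 4*H*σ^2*p - K*σ^2*p^2) * K * (-σ / (c^2 * a))
      - (-(4*H)*(2*σ*c*p + σ^2*(-σ/(c^2*a))) - K*(2*σ*c*p^2 + 2*σ^2*p*(-σ/(c^2*a)))) * (2*H + K*p) = 0 := by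
  have hp' : a = c * (K * p + 2 * H) := by field_simp at hp; linarith
  subst hp'
  have hR : K * c ^ 2 * p ^ 2 + 4 * H * c ^ 2 * p + 1 = 0 := by
    have h2 : K * (K * c ^ 2 * p ^ 2 + 4 * H * c ^ 2 * p + 1) = 0 := by linear_combination ha2
    exact (mul_eq_zero.mp h2).resolve_left hK
  have hb : K * p + 2 * H ≠ 0 := right_ne_zero_of_mul ha
  field_simp
  linear_combination σ * (-8 * H ^ 2) * hs2 + 2 * σ * c ^ 2 * (K * p + 2 * H) ^ 2 * hR - 2 * σ * ha2

/-- The Scherk-type profile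
`u₀(s) = (1/K)·(−2H·s + ∫₀ˢ √(4H²·cos²(t) − K)/cos(t) dt)` (with `K := 4H² + κ < 0`)
is twice differentiable on `(0, π/2)`, the gradient quantity
`W(s) = 1 − 4H²/K − 4H·sin²(s)·u₀′(s) − K·sin²(s)·u₀′(s)²` is differentiable there,
and `u₀` solves the reduced minimal surface ODE
`2·W·K·u₀″ − W′·(2H + K·u₀′) = 0` on `(0, π/2)`. -/
theorem scherk_profile_solves_ODE
    (H κ : ℝ) (hK : 4 * H ^ 2 + κ < 0) :
    let K : ℝ := 4 * H ^ 2 + κ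
    let u₀ : ℝ → ℝ := fun s => (1 / K) *
      (-2 * H * s + ∫ t in (0:ℝ)..s, Real.sqrt (4 * H ^ 2 * (Real.cos t) ^ 2 - K) / Real.cos t)
    let W : ℝ → ℝ := fun s =>
      1 - 4 * H ^ 2 / K - 4 * H * (Real.sin s) ^ 2 * deriv u₀ s
        - K * (Real.sin s) ^ 2 * (deriv u₀ s) ^ 2
    DifferentiableOn ℝ u₀ (Ioo 0 (π / 2)) ∧
    DifferentiableOn ℝ (deriv u₀) (Ioo 0 (π / 2)) ∧
    DifferentiableOn ℝ W (Ioo 0 (π / 2)) ∧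
    ∀ s ∈ Ioo 0 (π / 2),
      2 * W s * K * deriv (deriv u₀) s - deriv W s * (2 * H + K * deriv u₀ s) = 0 := by
  intro K u₀ W
  have hKlt : K < 0 := hK
  have hK0 : K ≠ 0 := ne_of_lt hKlt
  have hA : ∀ t : ℝ, 0 < 4 * H ^ 2 * (Real.cos t) ^ 2 - K := by
    intro t
    nlinarith [sq_nonneg (H * Real.cos t), sq_nonneg (Real.cos t), sq_nonneg H]
  set g : ℝ → ℝ := fun t => Real.sqrt (4 * H ^ 2 * (Real.cos t) ^ 2 - K) / Real.cos t with hgdef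
  have hsub : Ioo (0:ℝ) (π / 2) ⊆ Ioo (-(π / 2)) (π / 2) := by
    intro x hx
    exact ⟨by nlinarith [Real.pi_pos, hx.1], hx.2⟩
  have hgc : ∀ t ∈ Ioo (-(π / 2)) (π / 2), ContinuousAt g t := by
    intro t ht
    have hct : 0 < Real.cos t := Real.cos_pos_of_mem_Ioo ht
    exact ContinuousAt.div
      ((Real.continuous_sqrt.continuousAt).comp
        ((Continuous.continuousAt (by continuity) : ContinuousAt (fun t : ℝ => 4 * H ^ 2 * (Real.cos t) ^ 2 - K) t)))
      Real.continuous_cos.continuousAt hct.ne'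
  -- the first derivative
  set v : ℝ → ℝ := fun s =>
    (-2 * H + Real.sqrt (4 * H ^ 2 * (Real.cos s) ^ 2 - K) / Real.cos s) / K with hvdef
  have hu : ∀ s ∈ Ioo (0:ℝ) (π / 2), HasDerivAt u₀ (v s) s := by
    intro s hs
    have hint : IntervalIntegrable g volume 0 s := by
      apply ContinuousOn.intervalIntegrable
      rw [uIcc_of_le hs.1.le]
      intro t ht
      have ht' : t ∈ Ioo (-(π / 2)) (π / 2) :=
        ⟨by nlinarith [Real.pi_pos, ht.1], lt_of_le_of_lt ht.2 hs.2⟩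
      exact (hgc t ht').continuousWithinAt
    have hmeas := ContinuousAt.stronglyMeasurableAtFilter (μ := volume) isOpen_Ioo hgc s (hsub hs)
    have hF : HasDerivAt (fun x => ∫ t in (0:ℝ)..x, g t) (g s) s :=
      intervalIntegral.integral_hasDerivAt_right hint hmeas (hgc s (hsub hs))
    have h1 : HasDerivAt (fun x : ℝ => -2 * H * x) (-2 * H) s := by
      simpa using (hasDerivAt_id s).const_mul (-2 * H)
    have h2 := (h1.add hF).const_mul (1 / K)
    have : u₀ = fun x => (1 / K) * (-2 * H * x + ∫ t in (0:ℝ)..x, g t) := rfl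
    rw [this]
    refine h2.congr_deriv (Eq.symm ?_)
    simp only [hvdef, hgdef]
    ring
  -- derivative of v
  have hv' : ∀ s ∈ Ioo (0:ℝ) (π / 2),
      HasDerivAt v (-Real.sin s /
        ((Real.cos s) ^ 2 * Real.sqrt (4 * H ^ 2 * (Real.cos s) ^ 2 - K))) s := by
    intro s hs
    have hc : 0 < Real.cos s := Real.cos_pos_of_mem_Ioo (hsub hs)
    have ha : 0 < Real.sqrt (4 * H ^ 2 * (Real.cos s) ^ 2 - K) := Real.sqrt_pos.mpr (hA s)
    have ha2 : (Real.sqrt (4 * H ^ 2 * (Real.cos s) ^ 2 - K)) ^ 2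
        = 4 * H ^ 2 * (Real.cos s) ^ 2 - K := Real.sq_sqrt (hA s).le
    have hinner : HasDerivAt (fun x : ℝ => 4 * H ^ 2 * (Real.cos x) ^ 2 - K)
        (4 * H ^ 2 * (2 * Real.cos s ^ 1 * (-Real.sin s))) s := by
      exact (((Real.hasDerivAt_cos s).pow 2).const_mul (4 * H ^ 2)).sub_const K
    have hsq := hinner.sqrt (hA s).ne'
    have hdiv := hsq.div (Real.hasDerivAt_cos s) hc.ne'
    have hfin := (hdiv.const_add (-2 * H)).div_const K
    refine hfin.congr_deriv (Eq.symm ?_)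
    generalize hq : Real.sqrt (4 * H ^ 2 * (Real.cos s) ^ 2 - K) = q at ha ha2 ⊢
    field_simp
    linear_combination (-Real.sin s) * ha2
  have hderiv_eq : ∀ s ∈ Ioo (0:ℝ) (π / 2), deriv u₀ s = v s :=
    fun s hs => (hu s hs).deriv
  have hmem : ∀ s ∈ Ioo (0:ℝ) (π / 2), Ioo (0:ℝ) (π / 2) ∈ nhds s :=
    fun s hs => isOpen_Ioo.mem_nhds hs
  -- second derivative of u₀
  have hdd : ∀ s ∈ Ioo (0:ℝ) (π / 2),
      HasDerivAt (deriv u₀) (-Real.sin s /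
        ((Real.cos s) ^ 2 * Real.sqrt (4 * H ^ 2 * (Real.cos s) ^ 2 - K))) s := by
    intro s hs
    exact (hv' s hs).congr_of_eventuallyEq
      (Filter.eventuallyEq_of_mem (hmem s hs) (fun x hx => hderiv_eq x hx))
  -- the auxiliary explicit W
  set Wt : ℝ → ℝ := fun x => 1 - 4 * H ^ 2 / K - 4 * H * ((Real.sin x) ^ 2 * v x)
      - K * ((Real.sin x) ^ 2 * (v x) ^ 2) with hWtdef
  have hWeq : ∀ s ∈ Ioo (0:ℝ) (π / 2), W s = Wt s := by
    intro s hs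
    show 1 - 4 * H ^ 2 / K - 4 * H * (Real.sin s) ^ 2 * deriv u₀ s
        - K * (Real.sin s) ^ 2 * (deriv u₀ s) ^ 2 = _
    rw [hderiv_eq s hs]
    simp only [hWtdef]
    ring
  have hWt' : ∀ s ∈ Ioo (0:ℝ) (π / 2),
      HasDerivAt Wt
        (-(4 * H) * (2 * Real.sin s * Real.cos s * v s + (Real.sin s) ^ 2 *
            (-Real.sin s / ((Real.cos s) ^ 2 * Real.sqrt (4 * H ^ 2 * (Real.cos s) ^ 2 - K))))
          - K * (2 * Real.sin s * Real.cos s * (v s) ^ 2 + 2 * (Real.sin s) ^ 2 * v s *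
            (-Real.sin s / ((Real.cos s) ^ 2 * Real.sqrt (4 * H ^ 2 * (Real.cos s) ^ 2 - K))))) s := by
    intro s hs
    have h1 : HasDerivAt (fun x : ℝ => (Real.sin x) ^ 2)
        (2 * Real.sin s ^ 1 * Real.cos s) s := (Real.hasDerivAt_sin s).pow 2
    have hvv := hv' s hs
    have h2 := h1.mul hvv
    have h3 := h1.mul (hvv.pow 2)
    have h4 := ((hasDerivAt_const s (1 - 4 * H ^ 2 / K)).sub (h2.const_mul (4 * H))).sub
      (h3.const_mul K)
    refine h4.congr_deriv (Eq.symm ?_)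
    rw [Pi.pow_apply]
    ring
  have hW' : ∀ s ∈ Ioo (0:ℝ) (π / 2),
      HasDerivAt W
        (-(4 * H) * (2 * Real.sin s * Real.cos s * v s + (Real.sin s) ^ 2 *
            (-Real.sin s / ((Real.cos s) ^ 2 * Real.sqrt (4 * H ^ 2 * (Real.cos s) ^ 2 - K))))
          - K * (2 * Real.sin s * Real.cos s * (v s) ^ 2 + 2 * (Real.sin s) ^ 2 * v s *
            (-Real.sin s / ((Real.cos s) ^ 2 * Real.sqrt (4 * H ^ 2 * (Real.cos s) ^ 2 - K))))) s := by
    intro s hs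
    exact (hWt' s hs).congr_of_eventuallyEq
      (Filter.eventuallyEq_of_mem (hmem s hs) (fun x hx => hWeq x hx))
  refine ⟨fun s hs => (hu s hs).differentiableAt.differentiableWithinAt,
    fun s hs => (hdd s hs).differentiableAt.differentiableWithinAt,
    fun s hs => (hW' s hs).differentiableAt.differentiableWithinAt, ?_⟩
  intro s hs
  have hc : 0 < Real.cos s := Real.cos_pos_of_mem_Ioo (hsub hs)
  have ha : 0 < Real.sqrt (4 * H ^ 2 * (Real.cos s) ^ 2 - K) := Real.sqrt_pos.mpr (hA s)
  have ha2 : (Real.sqrt (4 * H ^ 2 * (Real.cos s) ^ 2 - K)) ^ 2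
      = 4 * H ^ 2 * (Real.cos s) ^ 2 - K := Real.sq_sqrt (hA s).le
  have hs2 : (Real.sin s) ^ 2 = 1 - (Real.cos s) ^ 2 := by
    have := Real.sin_sq_add_cos_sq s
    linarith
  have hp : K * v s = Real.sqrt (4 * H ^ 2 * (Real.cos s) ^ 2 - K) / Real.cos s - 2 * H := by
    simp only [hvdef]
    field_simp
    ring
  rw [(hdd s hs).deriv, (hW' s hs).deriv, hderiv_eq s hs, hWeq s hs]
  have hkey := scherk_key H K (Real.cos s) (Real.sin s)
    (Real.sqrt (4 * H ^ 2 * (Real.cos s) ^ 2 - K)) (v s) hK0 hc.ne' ha.ne' hp ha2 hs2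
  simp only [hWtdef]
  linear_combination hkey
end
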